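/- Let (A, ·, 1, r) be a quasitriangular infinitesimal bialgebra of weight λ and M an A-bimodule. Define φ : M → A ⊗ M by φ(m) = −Σᵢ uᵢ ⊗ (vᵢ ▷ m) and ψ : M → M ⊗ A by ψ(m) = Σᵢ (m ◁ uᵢ) ⊗ vᵢ − λ(m ⊗ 1). Then (id_A ⊗ ψ)∘φ = (φ ⊗ id_A)∘ψ, i.e. M is an A-bicomodule. -/

import Mathlib

open TensorProduct BigOperators

noncomputable def r12 {k A ι : Type*} [Field k] [Ring A] [Algebra k A] [Fintype ι]
    (u v : ι → A) : (A ⊗[k] A) ⊗[k] A :=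
  ∑ i, ((u i) ⊗ₜ[k] (v i)) ⊗ₜ[k] (1 : A)

noncomputable def r13 {k A ι : Type*} [Field k] [Ring A] [Algebra k A] [Fintype ι]
    (u v : ι → A) : (A ⊗[k] A) ⊗[k] A :=
  ∑ i, ((u i) ⊗ₜ[k] (1 : A)) ⊗ₜ[k] (v i)

noncomputable def r23 {k A ι : Type*} [Field k] [Ring A] [Algebra k A] [Fintype ι]
    (u v : ι → A) : (A ⊗[k] A) ⊗[k] A :=
  ∑ i, ((1 : A) ⊗ₜ[k] (u i)) ⊗ₜ[k] (v i)

/-- `ψ(m) = Σᵢ (m ◁ uᵢ) ⊗ vᵢ − λ (m ⊗ 1)`. -/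
noncomputable def psiMap {k A M ι : Type*} [Field k] [Ring A] [Algebra k A]
    [AddCommGroup M] [Module k M] [Fintype ι] (lam : k) (u v : ι → A)
    (rAct : M →ₗ[k] A →ₗ[k] M) : M →ₗ[k] M ⊗[k] A :=
  (∑ i, ((TensorProduct.mk k M A).flip (v i)).comp (rAct.flip (u i)))
    - lam • ((TensorProduct.mk k M A).flip (1 : A))

/-- `φ(m) = −Σᵢ uᵢ ⊗ (vᵢ ▷ m)`. -/
noncomputable def phiMap {k A M ι : Type*} [Field k] [Ring A] [Algebra k A]
    [AddCommGroup M] [Module k M] [Fintype ι] (u v : ι → A)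
    (lAct : A →ₗ[k] M →ₗ[k] M) : M →ₗ[k] A ⊗[k] M :=
  -(∑ i, (TensorProduct.mk k A M (u i)).comp (lAct (v i)))

/-- For a quasitriangular infinitesimal bialgebra `(A, r)` of weight `λ` and an
`A`-bimodule `M`, the coactions `φ(m) = −Σᵢ uᵢ ⊗ (vᵢ▷m)` and
`ψ(m) = Σᵢ (m◁uᵢ) ⊗ vᵢ − λ(m⊗1)` satisfy `(id_A ⊗ ψ)∘φ = (φ ⊗ id_A)∘ψ`,
i.e. `M` is an `A`-bicomodule. -/
theorem stmt3 {k A M ι : Type*} [Field k] [Ring A] [Algebra k A]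
    [AddCommGroup M] [Module k M] [Fintype ι] (lam : k) (u v : ι → A)
    (lAct : A →ₗ[k] M →ₗ[k] M) (rAct : M →ₗ[k] A →ₗ[k] M)
    (hl : ∀ (x y : A) (m : M), lAct (x * y) m = lAct x (lAct y m))
    (hr : ∀ (m : M) (x y : A), rAct (rAct m x) y = rAct m (x * y))
    (hlr : ∀ (x : A) (m : M) (y : A), rAct (lAct x m) y = lAct x (rAct m y))
    (hWAYB : r13 u v * r12 u v - r12 u v * r23 u v + r23 u v * r13 u v
        - lam • r13 u v = (0 : (A ⊗[k] A) ⊗[k] A)) :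
    ∀ m : M,
      (LinearMap.lTensor A (psiMap lam u v rAct)) (phiMap u v lAct m)
        = (TensorProduct.assoc k A M A)
            ((LinearMap.rTensor A (phiMap u v lAct)) (psiMap lam u v rAct m)) := by
  intro m
  simp only [phiMap, psiMap, LinearMap.neg_apply, LinearMap.sum_apply, LinearMap.comp_apply,
    LinearMap.flip_apply, TensorProduct.mk_apply, LinearMap.sub_apply, LinearMap.smul_apply,
    map_neg, map_sum, map_sub, map_smul, LinearMap.lTensor_tmul, LinearMap.rTensor_tmul,
    tmul_sub, tmul_sum, tmul_smul, sub_tmul, sum_tmul, smul_tmul', TensorProduct.assoc_tmul,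
    neg_tmul, tmul_neg]
  simp only [hlr]
  simp only [smul_tmul', map_smul, map_neg, map_sum, TensorProduct.assoc_tmul, sum_tmul,
    Finset.sum_sub_distrib, tmul_smul, smul_neg, neg_neg, Finset.sum_neg_distrib]
  simp only [neg_tmul, tmul_smul, ← smul_tmul', map_neg, map_smul, map_sum,
    TensorProduct.assoc_tmul, neg_neg, Finset.smul_sum]
  simp only [sum_tmul, ← smul_tmul', map_sum, map_smul, TensorProduct.assoc_tmul]
  have hsum : (∑ x : ι, ∑ y : ι, u x ⊗ₜ[k] (lAct (v x)) ((rAct m) (u y)) ⊗ₜ[k] v y)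
      = ∑ x : ι, ∑ y : ι, u y ⊗ₜ[k] (lAct (v y)) ((rAct m) (u x)) ⊗ₜ[k] v x :=
    Finset.sum_comm
  simp only [map_neg (TensorProduct.assoc k A M A), map_sum (TensorProduct.assoc k A M A),
    map_smul (TensorProduct.assoc k A M A), TensorProduct.assoc_tmul, Finset.sum_neg_distrib]
  rw [Finset.sum_comm]
  abel
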